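/- arXiv:1906.00236 — 3 statements merged into one kernel-verified Lean document; each statement's English description precedes it below -/
import Mathlib

section
/- Let N ≥ 1 and m ≥ 1 be integers with N·m ≥ 2, let A_p be a d×d real matrix, and let B_0, B_1, …, B_{Nm−1} be d×d real matrices. Let M ≥ 0 and ε ≥ 0 be such that ‖A_p‖ ≤ M, ‖B_i‖ ≤ M and ‖A_p B_i − B_i A_p‖ ≤ ε for every i. Suppose there are indices Nm > j_1 > j_2 > ⋯ > j_m ≥ 0 such that B_{j_k} = A_p and j_k ≥ Nm − kN for each k ∈ {1, …, m}. Let L_1 denote the ordered product (in decreasing order of index) of the Nm − m factors B_i with i ∉ {j_1, …, j_m}. Then ‖B_{Nm−1} B_{Nm−2} ⋯ B_0 − A_p^m L_1‖ ≤ (N−1) · (m(m+1)/2) · M^{Nm−2} · ε. -/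
set_option linter.unusedSectionVars false
set_option maxHeartbeats 1000000

section Gen
variable {R : Type*} [NormedRing R]

/-- `PullExt a k l l' c` : `l'` is obtained from `l` by successively removing `k`
occurrences of `a`, the cost `c` being the sum of the lengths of the prefixes
before each removed occurrence at removal time. -/
inductive PullExt (a : R) : ℕ → List R → List R → ℕ → Prop
  | base (l : List R) : PullExt a 0 l l 0
  | cons (p t : List R) {l' : List R} {k c : ℕ} :
      PullExt a k (p ++ t) l' c → PullExt a (k + 1) (p ++ a :: t) l' (p.length + c)

lemma PullExt.consElem {a x : R} {k c : ℕ} {l l' : List R} (h : PullExt a k l l' c) :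
    PullExt a k (x :: l) (x :: l') (k + c) := by
  induction h with
  | base l => simpa using PullExt.base (a := a) (x :: l)
  | cons p t h ih =>
      rename_i l2 k2 c2
      have h2 := PullExt.cons (a := a) (x :: p) t ih
      have he : (x :: p).length + (k2 + c2) = k2 + 1 + (p.length + c2) := by simp; omega
      rw [he] at h2
      simpa using h2

lemma PullExt.length_ge {a : R} {k c : ℕ} {l l' : List R} (h : PullExt a k l l' c) (hc : c ≠ 0) :
    2 ≤ l.length := by
  induction h with
  | base l => omega
  | cons p t h ih =>
      rcases Nat.eq_zero_or_pos p.length with hp | hp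
      · have h2 := ih (by simp_all)
        simp at h2 ⊢
        omega
      · simp
        omega

lemma norm_list_prod_le {M : ℝ} (hM : 0 ≤ M) (h1 : ‖(1 : R)‖ ≤ 1) :
    ∀ (p : List R), (∀ x ∈ p, ‖x‖ ≤ M) → ‖p.prod‖ ≤ M ^ p.length := by
  intro p
  induction p with
  | nil => intro _; simpa using h1
  | cons x t ih =>
      intro hx
      have h2 : ‖t.prod‖ ≤ M ^ t.length := ih (fun y hy => hx y (List.mem_cons_of_mem _ hy))
      calc ‖(x :: t).prod‖ = ‖x * t.prod‖ := by rw [List.prod_cons]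
        _ ≤ ‖x‖ * ‖t.prod‖ := norm_mul_le _ _
        _ ≤ M * M ^ t.length := by
            apply mul_le_mul (hx x (List.mem_cons_self)) h2 (norm_nonneg _) hM
        _ = M ^ (x :: t).length := by rw [List.length_cons, pow_succ']

lemma norm_comm_prod {a : R} {M ε : ℝ} (hM : 0 ≤ M) (hε : 0 ≤ ε) (h1 : ‖(1 : R)‖ ≤ 1) :
    ∀ (p : List R), (∀ x ∈ p, ‖x‖ ≤ M) → (∀ x ∈ p, ‖a * x - x * a‖ ≤ ε) →
      ‖p.prod * a - a * p.prod‖ ≤ p.length * M ^ (p.length - 1) * ε := by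
  intro p
  induction p with
  | nil => intro _ _; simp
  | cons x t ih =>
      intro hb hc
      have hbt : ∀ y ∈ t, ‖y‖ ≤ M := fun y hy => hb y (List.mem_cons_of_mem _ hy)
      have hct : ∀ y ∈ t, ‖a * y - y * a‖ ≤ ε := fun y hy => hc y (List.mem_cons_of_mem _ hy)
      have iht := ih hbt hct
      have hprod : ‖t.prod‖ ≤ M ^ t.length := norm_list_prod_le hM h1 t hbt
      have key : (x :: t).prod * a - a * (x :: t).prod
          = x * (t.prod * a - a * t.prod) + (x * a - a * x) * t.prod := by
        simp only [List.prod_cons]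
        noncomm_ring
      have hxa : ‖x * a - a * x‖ ≤ ε := by
        have := hc x (List.mem_cons_self)
        rwa [← norm_neg, neg_sub] at this
      have h3 : ‖(x :: t).prod * a - a * (x :: t).prod‖
          ≤ ‖x‖ * ‖t.prod * a - a * t.prod‖ + ‖x * a - a * x‖ * ‖t.prod‖ := by
        rw [key]
        exact (norm_add_le _ _).trans (by gcongr <;> exact norm_mul_le _ _)
      rcases Nat.eq_zero_or_pos t.length with h0 | hpos
      · have ht : t = [] := List.length_eq_zero_iff.mp h0
        subst ht
        simpa using hxa
      · have e1 : ‖x‖ * ‖t.prod * a - a * t.prod‖ ≤ M * (t.length * M ^ (t.length - 1) * ε) := by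
          apply mul_le_mul (hb x (List.mem_cons_self)) iht (norm_nonneg _) hM
        have e2 : ‖x * a - a * x‖ * ‖t.prod‖ ≤ ε * M ^ t.length := by
          apply mul_le_mul hxa hprod (norm_nonneg _) hε
        have epow : M * M ^ (t.length - 1) = M ^ t.length := by
          rw [← pow_succ']
          congr 1
          omega
        calc ‖(x :: t).prod * a - a * (x :: t).prod‖
            ≤ M * (t.length * M ^ (t.length - 1) * ε) + ε * M ^ t.length := by
              exact h3.trans (add_le_add e1 e2)
          _ = (t.length + 1) * M ^ t.length * ε := by
              rw [← mul_assoc,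
                show M * ((t.length:ℝ) * M ^ (t.length-1)) = (t.length:ℝ) * (M * M^(t.length-1)) by ring,
                epow]
              ring
          _ = ((x :: t).length : ℝ) * M ^ ((x :: t).length - 1) * ε := by
              simp

lemma PullExt.norm_bound {a : R} {M ε : ℝ} (hM : 0 ≤ M) (hε : 0 ≤ ε) (h1 : ‖(1 : R)‖ ≤ 1)
    (ha : ‖a‖ ≤ M) {k c : ℕ} {l l' : List R} (h : PullExt a k l l' c)
    (hb : ∀ x ∈ l, ‖x‖ ≤ M) (hc : ∀ x ∈ l, ‖a * x - x * a‖ ≤ ε) :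
    ‖l.prod - a ^ k * l'.prod‖ ≤ c * M ^ (l.length - 2) * ε := by
  induction h with
  | base l => simp
  | cons p t h ih =>
      rename_i l' k c
      have hbp : ∀ x ∈ p, ‖x‖ ≤ M := fun x hx => hb x (by simp [hx])
      have hcp : ∀ x ∈ p, ‖a * x - x * a‖ ≤ ε := fun x hx => hc x (by simp [hx])
      have hbt : ∀ x ∈ t, ‖x‖ ≤ M := fun x hx => hb x (by simp [hx])
      have hbpt : ∀ x ∈ p ++ t, ‖x‖ ≤ M := fun x hx => hb x (by simp at hx ⊢; tauto)
      have hcpt : ∀ x ∈ p ++ t, ‖a * x - x * a‖ ≤ ε := fun x hx => hc x (by simp at hx ⊢; tauto)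
      have ihp := ih hbpt hcpt
      have hcomm := norm_comm_prod hM hε h1 p hbp hcp
      have htp : ‖t.prod‖ ≤ M ^ t.length := norm_list_prod_le hM h1 t hbt
      have key : (p ++ a :: t).prod - a ^ (k + 1) * l'.prod
          = (p.prod * a - a * p.prod) * t.prod + a * ((p ++ t).prod - a ^ k * l'.prod) := by
        simp only [List.prod_append, List.prod_cons, pow_succ']
        noncomm_ring
      have tri : ‖(p ++ a :: t).prod - a ^ (k + 1) * l'.prod‖
          ≤ ‖p.prod * a - a * p.prod‖ * ‖t.prod‖ + ‖a‖ * ‖(p ++ t).prod - a ^ k * l'.prod‖ := by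
        rw [key]
        exact (norm_add_le _ _).trans (by gcongr <;> exact norm_mul_le _ _)
      have hlen : (p ++ a :: t).length = p.length + t.length + 1 := by simp; omega
      have term1 : ‖p.prod * a - a * p.prod‖ * ‖t.prod‖
          ≤ p.length * M ^ ((p ++ a :: t).length - 2) * ε := by
        rcases Nat.eq_zero_or_pos p.length with hp0 | hppos
        · have hp : p = [] := List.length_eq_zero_iff.mp hp0
          subst hp
          simp
        · have e : ‖p.prod * a - a * p.prod‖ * ‖t.prod‖
              ≤ (p.length * M ^ (p.length - 1) * ε) * M ^ t.length := by
            apply mul_le_mul hcomm htp (norm_nonneg _)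
            positivity
          refine e.trans (le_of_eq ?_)
          rw [hlen, show p.length + t.length + 1 - 2 = (p.length - 1) + t.length by omega,
            pow_add]
          ring
      have term2 : ‖a‖ * ‖(p ++ t).prod - a ^ k * l'.prod‖
          ≤ c * M ^ ((p ++ a :: t).length - 2) * ε := by
        rcases Nat.eq_zero_or_pos c with hc0 | hcpos
        · subst hc0
          simp only [Nat.cast_zero, zero_mul] at ihp ⊢
          have h0 : ‖(p ++ t).prod - a ^ k * l'.prod‖ ≤ 0 := ihp
          calc ‖a‖ * ‖(p ++ t).prod - a ^ k * l'.prod‖ ≤ M * 0 :=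
              mul_le_mul ha h0 (norm_nonneg _) hM
            _ = 0 := by ring
        · have h2 : 2 ≤ (p ++ t).length := h.length_ge (by omega)
          have e : ‖a‖ * ‖(p ++ t).prod - a ^ k * l'.prod‖
              ≤ M * (c * M ^ ((p ++ t).length - 2) * ε) := by
            apply mul_le_mul ha ihp (norm_nonneg _) hM
          have h2' : 2 ≤ p.length + t.length := by simpa using h2
          refine e.trans (le_of_eq ?_)
          rw [hlen, show (p ++ t).length = p.length + t.length from by simp,
            show p.length + t.length + 1 - 2 = 1 + (p.length + t.length - 2) by omega,
            pow_add, pow_one]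
          ring
      calc ‖(p ++ a :: t).prod - a ^ (k + 1) * l'.prod‖
          ≤ p.length * M ^ ((p ++ a :: t).length - 2) * ε
            + c * M ^ ((p ++ a :: t).length - 2) * ε := tri.trans (add_le_add term1 term2)
        _ = ((p.length + c : ℕ) : ℝ) * M ^ ((p ++ a :: t).length - 2) * ε := by
            push_cast
            ring

/-- The cost of pulling all the `q`-elements of `l` out to the front. -/
def qcost {ι : Type*} (q : ι → Bool) : List ι → ℕ
  | [] => 0
  | x :: t => (if q x then 0 else t.countP q) + qcost q t

lemma pullExt_build {ι : Type*} (q : ι → Bool) (f : ι → R) (a : R) :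
    ∀ l : List ι, (∀ i ∈ l, q i = true → f i = a) →
      PullExt a (l.countP q) (l.map f) ((l.filter (fun i => !q i)).map f) (qcost q l) := by
  intro l
  induction l with
  | nil => intro _; exact PullExt.base []
  | cons x t ih =>
      intro hl
      have iht := ih (fun i hi hq => hl i (List.mem_cons_of_mem _ hi) hq)
      by_cases hq : q x = true
      · have hfx : f x = a := hl x (List.mem_cons_self) hq
        have h2 := PullExt.cons (a := a) [] (t.map f) iht
        simp only [List.nil_append, List.length_nil, Nat.zero_add] at h2
        have e1 : (x :: t).countP q = t.countP q + 1 := by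
          rw [List.countP_cons, hq]
          simp
        have e2 : (x :: t).map f = a :: t.map f := by simp [hfx]
        have e3 : ((x :: t).filter (fun i => !q i)) = t.filter (fun i => !q i) := by
          rw [List.filter_cons]
          simp [hq]
        have e4 : qcost q (x :: t) = qcost q t := by simp [qcost, hq]
        rw [e1, e2, e3, e4]
        exact h2
      · have hq' : q x = false := by simpa using hq
        have h2 := iht.consElem (x := f x)
        have e1 : (x :: t).countP q = t.countP q := by
          rw [List.countP_cons, hq']
          simp
        have e3 : ((x :: t).filter (fun i => !q i)) = x :: t.filter (fun i => !q i) := by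
          rw [List.filter_cons]
          simp [hq']
        have e4 : qcost q (x :: t) = t.countP q + qcost q t := by simp [qcost, hq']
        rw [e1, e3, e4]
        simpa using h2
end Gen

lemma sum_map_add {ι : Type*} (l : List ι) (f g : ι → ℕ) :
    (l.map (fun y => f y + g y)).sum = (l.map f).sum + (l.map g).sum := by
  induction l with
  | nil => simp
  | cons x t ih => simp [ih]; omega

lemma qcost_sorted {n : ℕ} (q : Fin n → Bool) :
    ∀ l : List (Fin n), l.Pairwise (fun x y => y < x) →
      qcost q l = ((l.filter q).map (fun y => l.countP (fun z => !q z && decide (y < z)))).sum := by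
  intro l
  induction l with
  | nil => simp [qcost]
  | cons x t ih =>
      intro hpw
      rw [List.pairwise_cons] at hpw
      obtain ⟨hx, ht⟩ := hpw
      have iht := ih ht
      have hcnt : ∀ y : Fin n, (x :: t).countP (fun z => !q z && decide (y < z))
          = t.countP (fun z => !q z && decide (y < z))
            + (if (!q x && decide (y < x)) then 1 else 0) := by
        intro y
        rw [List.countP_cons]
      by_cases hq : q x = true
      · have e3 : ((x :: t).filter q) = x :: t.filter q := by rw [List.filter_cons]; simp [hq]
        have hFx : (x :: t).countP (fun z => !q z && decide (x < z)) = 0 := by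
          rw [List.countP_eq_zero]
          intro z hz
          simp only [List.mem_cons] at hz
          rcases hz with rfl | hz
          · simp
          · have : z < x := hx z hz
            simp [Bool.and_eq_true, decide_eq_true_eq]
            intro _
            omega
        have emap : (t.filter q).map (fun y => (x :: t).countP (fun z => !q z && decide (y < z)))
            = (t.filter q).map (fun y => t.countP (fun z => !q z && decide (y < z))) := by
          apply List.map_congr_left
          intro y hy
          rw [hcnt y]
          simp [hq]
        rw [e3]
        simp only [List.map_cons, List.sum_cons, hFx, emap, Nat.zero_add, ← iht]
        simp [qcost, hq]
      · have hq' : q x = false := by simpa using hq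
        have e3 : ((x :: t).filter q) = t.filter q := by rw [List.filter_cons]; simp [hq']
        have emap : (t.filter q).map (fun y => (x :: t).countP (fun z => !q z && decide (y < z)))
            = (t.filter q).map (fun y => t.countP (fun z => !q z && decide (y < z)) + 1) := by
          apply List.map_congr_left
          intro y hy
          rw [hcnt y]
          have hyx : y < x := hx y (List.mem_of_mem_filter hy)
          simp [hq', hyx]
        rw [e3, emap, sum_map_add]
        have hlen : ((t.filter q).map (fun _ => 1)).sum = t.countP q := by
          simp [List.countP_eq_length_filter]
        rw [hlen, ← iht]
        simp [qcost, hq']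
        omega

lemma arith_aux (Acard Bcard Tcard n2 P2 P3 jv kv : ℕ)
    (h1 : Bcard + Acard = Tcard) (h2 : Tcard = n2 - 1 - jv) (h3 : kv ≤ Bcard)
    (h4 : n2 - P2 ≤ jv) (h5 : jv < n2) (e : P3 + (kv + 1) = P2) : Acard ≤ P3 := by
  omega

lemma cast_gauss : ∀ (m N : ℕ), 1 ≤ N →
    ((∑ k ∈ Finset.range m, (k + 1) * (N - 1) : ℕ) : ℝ)
      = ((N : ℝ) - 1) * ((m : ℝ) * ((m : ℝ) + 1) / 2) := by
  intro m N hN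
  induction m with
  | zero => simp
  | succ m ih =>
      rw [Finset.sum_range_succ]
      push_cast [Nat.cast_sub hN]
      push_cast [Nat.cast_sub hN] at ih
      rw [ih]
      ring

/-- The operator norm on `d × d` real matrices induced by the Euclidean norm on `ℝ^d`. -/
noncomputable def opNorm {d : ℕ} (A : Matrix (Fin d) (Fin d) ℝ) : ℝ :=
  ‖Matrix.toEuclideanCLM (𝕜 := ℝ) A‖

theorem rearrangement_error_bound {d N m : ℕ} (hN : 1 ≤ N) (hm : 1 ≤ m)
    (hNm : 2 ≤ N * m)
    (Ap : Matrix (Fin d) (Fin d) ℝ) (B : Fin (N * m) → Matrix (Fin d) (Fin d) ℝ)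
    (M ε : ℝ) (hM : 0 ≤ M) (hε : 0 ≤ ε)
    (hAp : opNorm Ap ≤ M)
    (hB : ∀ i, opNorm (B i) ≤ M)
    (hcomm : ∀ i, opNorm (Ap * B i - B i * Ap) ≤ ε)
    (j : Fin m → Fin (N * m)) (hj : StrictAnti j)
    (hjB : ∀ k, B (j k) = Ap)
    (hjge : ∀ k : Fin m, N * m - (k.val + 1) * N ≤ (j k).val) :
    opNorm ((((List.finRange (N * m)).reverse.map B).prod) -
        Ap ^ m *
          ((((List.finRange (N * m)).reverse.filter
              (fun i => i ∉ Finset.image j Finset.univ)).map B).prod)) ≤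
      ((N : ℝ) - 1) * ((m : ℝ) * ((m : ℝ) + 1) / 2) * M ^ (N * m - 2) * ε := by
  unfold opNorm at hAp hB hcomm ⊢
  set a := Matrix.toEuclideanCLM (𝕜 := ℝ) Ap with ha_def
  set g : Fin (N * m) → _ := fun i => Matrix.toEuclideanCLM (𝕜 := ℝ) (B i) with hg_def
  set S : Finset (Fin (N * m)) := Finset.image j Finset.univ with hS_def
  set q : Fin (N * m) → Bool := fun i => decide (i ∈ S) with hq_def
  set idx : List (Fin (N * m)) := (List.finRange (N * m)).reverse with hidx
  have h1 : ‖(1 : EuclideanSpace ℝ (Fin d) →L[ℝ] EuclideanSpace ℝ (Fin d))‖ ≤ 1 := by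
    rw [ContinuousLinearMap.one_def]
    exact ContinuousLinearMap.norm_id_le
  have hfilter : (fun i : Fin (N * m) => (decide (i ∉ S) : Bool)) = fun i => !q i := by
    funext i
    by_cases h : i ∈ S <;> simp [h, hq_def]
  have hX : Matrix.toEuclideanCLM (𝕜 := ℝ)
        ((idx.map B).prod - Ap ^ m * ((idx.filter (fun i => decide (i ∉ S))).map B).prod)
      = (idx.map g).prod - a ^ m * ((idx.filter (fun i => !q i)).map g).prod := by
    rw [map_sub, map_mul, map_pow, map_list_prod, map_list_prod, List.map_map, List.map_map,
      hfilter]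
    rfl
  rw [hX]
  -- build the extraction
  have hqa : ∀ i ∈ idx, q i = true → g i = a := by
    intro i _ hqi
    rw [hq_def] at hqi
    simp only [decide_eq_true_eq] at hqi
    rw [hS_def] at hqi
    obtain ⟨k, -, rfl⟩ := Finset.mem_image.mp hqi
    simp [hg_def, hjB k, ha_def]
  have pe := pullExt_build q g a idx hqa
  have hnodup : idx.Nodup := by
    rw [hidx, List.nodup_reverse]
    exact List.nodup_finRange _
  have hidxF : idx.toFinset = Finset.univ := by
    rw [hidx, List.toFinset_reverse, List.toFinset_finRange]
  have htof : (idx.filter q).toFinset = S := by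
    rw [List.toFinset_filter, hidxF]
    ext i
    simp [hq_def]
  have hcount : idx.countP q = m := by
    rw [List.countP_eq_length_filter]
    have hnf : (idx.filter q).Nodup := hnodup.filter _
    have hc2 := List.toFinset_card_of_nodup hnf
    rw [htof] at hc2
    rw [← hc2, hS_def, Finset.card_image_of_injective _ hj.injective]
    simp
  rw [hcount] at pe
  have hb' : ∀ x ∈ idx.map g, ‖x‖ ≤ M := by
    intro x hx
    obtain ⟨i, -, rfl⟩ := List.mem_map.mp hx
    exact hB i
  have hc' : ∀ x ∈ idx.map g, ‖a * x - x * a‖ ≤ ε := by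
    intro x hx
    obtain ⟨i, -, rfl⟩ := List.mem_map.mp hx
    have he : a * g i - g i * a
        = Matrix.toEuclideanCLM (𝕜 := ℝ) (Ap * B i - B i * Ap) := by
      rw [map_sub, map_mul, map_mul]
    rw [he]
    exact hcomm i
  have main := pe.norm_bound hM hε h1 hAp hb' hc'
  have hlen : (idx.map g).length = N * m := by simp [hidx]
  rw [hlen] at main
  -- bound the cost
  have hpw : idx.Pairwise (fun x y => y < x) := by
    rw [hidx, List.pairwise_reverse]
    exact List.pairwise_lt_finRange _
  have hsum : qcost q idx = ∑ y ∈ S, idx.countP (fun z => !q z && decide (y < z)) := by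
    rw [qcost_sorted q idx hpw, ← List.sum_toFinset _ (hnodup.filter _), htof]
  have hterm : ∀ k : Fin m,
      idx.countP (fun z => !q z && decide (j k < z)) ≤ ((k : ℕ) + 1) * (N - 1) := by
    intro k
    have hcard : idx.countP (fun z => !q z && decide (j k < z))
        = ((Finset.univ.filter (fun z : Fin (N * m) => j k < z)).filter (fun z => z ∉ S)).card := by
      rw [List.countP_eq_length_filter]
      have hnf := hnodup.filter (fun z => !q z && decide (j k < z))
      rw [← List.toFinset_card_of_nodup hnf, List.toFinset_filter, hidxF]
      congr 1
      ext z
      simp [hq_def, Finset.mem_filter, and_comm]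
    have hsplit : ((Finset.univ.filter (fun z : Fin (N * m) => j k < z)).filter
          (fun z => z ∈ S)).card
        + ((Finset.univ.filter (fun z : Fin (N * m) => j k < z)).filter (fun z => z ∉ S)).card
        = (Finset.univ.filter (fun z : Fin (N * m) => j k < z)).card :=
      Finset.card_filter_add_card_filter_not _
    have hTcard : (Finset.univ.filter (fun z : Fin (N * m) => j k < z)).card
        = N * m - 1 - (j k : ℕ) := by
      rw [show Finset.univ.filter (fun z : Fin (N * m) => j k < z) = Finset.Ioi (j k) from by
        ext z; simp]
      exact Fin.card_Ioi _
    have hBcard : (k : ℕ) ≤ ((Finset.univ.filter (fun z : Fin (N * m) => j k < z)).filter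
        (fun z => z ∈ S)).card := by
      have hsub : (Finset.Iio k).image j
          ⊆ (Finset.univ.filter (fun z : Fin (N * m) => j k < z)).filter (fun z => z ∈ S) := by
        intro z hz
        obtain ⟨i, hi, rfl⟩ := Finset.mem_image.mp hz
        rw [Finset.mem_Iio] at hi
        simp only [Finset.mem_filter, Finset.mem_univ, true_and]
        exact ⟨hj hi, by rw [hS_def]; exact Finset.mem_image.mpr ⟨i, Finset.mem_univ i, rfl⟩⟩
      have hcc := Finset.card_le_card hsub
      rwa [Finset.card_image_of_injective _ hj.injective, Fin.card_Iio] at hcc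
    have e : ((k : ℕ) + 1) * (N - 1) + ((k : ℕ) + 1) = ((k : ℕ) + 1) * N := by
      rw [show ((k : ℕ) + 1) * (N - 1) + ((k : ℕ) + 1) = ((k : ℕ) + 1) * (N - 1)
          + ((k : ℕ) + 1) * 1 by ring, ← Nat.mul_add]
      congr 1
      omega
    rw [hcard]
    exact arith_aux _ _ _ (N * m) (((k : ℕ) + 1) * N) _ (j k : ℕ) (k : ℕ)
      hsplit hTcard hBcard (hjge k) (j k).is_lt e
  have hcost : qcost q idx ≤ ∑ k ∈ Finset.range m, (k + 1) * (N - 1) := by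
    rw [hsum, hS_def,
      Finset.sum_image (fun x _ y _ h => hj.injective h)]
    calc ∑ k : Fin m, idx.countP (fun z => !q z && decide (j k < z))
        ≤ ∑ k : Fin m, ((k : ℕ) + 1) * (N - 1) := Finset.sum_le_sum (fun k _ => hterm k)
      _ = ∑ k ∈ Finset.range m, (k + 1) * (N - 1) :=
          Fin.sum_univ_eq_sum_range (fun i => (i + 1) * (N - 1)) m
  -- conclude
  calc ‖(idx.map g).prod - a ^ m * ((idx.filter (fun i => !q i)).map g).prod‖
      ≤ (qcost q idx : ℝ) * M ^ (N * m - 2) * ε := main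
    _ ≤ ((∑ k ∈ Finset.range m, (k + 1) * (N - 1) : ℕ) : ℝ) * M ^ (N * m - 2) * ε := by
        apply mul_le_mul_of_nonneg_right _ hε
        apply mul_le_mul_of_nonneg_right _ (by positivity)
        exact_mod_cast hcost
    _ = ((N : ℝ) - 1) * ((m : ℝ) * ((m : ℝ) + 1) / 2) * M ^ (N * m - 2) * ε := by
        rw [cast_gauss m N hN]
end

section
/- Let N ≥ 1 and m ≥ 1 be integers with N·m ≥ 2, let A_p be a d×d real matrix, and let B_0, B_1, …, B_{Nm−1} be d×d real matrices. Let M ≥ 0, ε ≥ 0 and ρ ≥ 0 be such that ‖A_p‖ ≤ M, ‖A_p^m‖ ≤ ρ, ‖B_i‖ ≤ M and ‖A_p B_i − B_i A_p‖ ≤ ε for every i. Suppose there are indices Nm > j_1 > j_2 > ⋯ > j_m ≥ 0 such that B_{j_k} = A_p and j_k ≥ Nm − kN for each k ∈ {1, …, m}. Then ‖B_{Nm−1} B_{Nm−2} ⋯ B_0‖ ≤ ρ · M^{(N−1)m} + (N−1) · (m(m+1)/2) · M^{Nm−2} · ε. -/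
section Aux

variable {R : Type*} [NormedRing R]

lemma aux_prod_norm_le {M : ℝ} (hM : 0 ≤ M) (h1 : ‖(1 : R)‖ ≤ 1) :
    ∀ (L : List R), (∀ x ∈ L, ‖x‖ ≤ M) → ‖L.prod‖ ≤ M ^ L.length
  | [], _ => by simpa using h1
  | x :: L, h => by
    have hx := h x (List.mem_cons_self)
    have hL := aux_prod_norm_le hM h1 L (fun y hy => h y (List.mem_cons_of_mem _ hy))
    calc ‖(x :: L).prod‖ = ‖x * L.prod‖ := by rw [List.prod_cons]
      _ ≤ ‖x‖ * ‖L.prod‖ := norm_mul_le _ _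
      _ ≤ M * M ^ L.length := mul_le_mul hx hL (norm_nonneg _) hM
      _ = M ^ (x :: L).length := by rw [List.length_cons, pow_succ']

lemma aux_pull_front {M ε : ℝ} (hM : 0 ≤ M) (hε : 0 ≤ ε) (h1 : ‖(1 : R)‖ ≤ 1)
    (a : R) (ha : ‖a‖ ≤ M) :
    ∀ (L1 L2 : List R), (∀ x ∈ L1, ‖x‖ ≤ M ∧ ‖a * x - x * a‖ ≤ ε) →
      (∀ x ∈ L2, ‖x‖ ≤ M) →
      ‖(L1 ++ a :: L2).prod - a * (L1 ++ L2).prod‖ ≤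
        (L1.length : ℝ) * ε * M ^ (L1.length - 1 + L2.length)
  | [], L2, _, _ => by simp
  | x :: L1, L2, hc, h2 => by
    have hx := hc x (List.mem_cons_self)
    have ih := aux_pull_front hM hε h1 a ha L1 L2
      (fun y hy => hc y (List.mem_cons_of_mem _ hy)) h2
    have hQ : ‖(L1 ++ L2).prod‖ ≤ M ^ (L1.length + L2.length) := by
      have := aux_prod_norm_le hM h1 (L1 ++ L2) (fun y hy => by
        rcases List.mem_append.mp hy with hy | hy
        · exact (hc y (List.mem_cons_of_mem _ hy)).1
        · exact h2 y hy)
      simpa using this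
    have key : ((x :: L1) ++ a :: L2).prod - a * ((x :: L1) ++ L2).prod
        = x * ((L1 ++ a :: L2).prod - a * (L1 ++ L2).prod)
          + (x * a - a * x) * (L1 ++ L2).prod := by
      simp only [List.cons_append, List.prod_cons]
      noncomm_ring
    have hcomm : ‖x * a - a * x‖ ≤ ε := by rw [norm_sub_rev]; exact hx.2
    have step : ‖((x :: L1) ++ a :: L2).prod - a * ((x :: L1) ++ L2).prod‖ ≤
        M * ((L1.length : ℝ) * ε * M ^ (L1.length - 1 + L2.length))
          + ε * M ^ (L1.length + L2.length) := by
      rw [key]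
      refine (norm_add_le _ _).trans (add_le_add ?_ ?_)
      · exact (norm_mul_le _ _).trans (mul_le_mul hx.1 ih (norm_nonneg _) hM)
      · exact (norm_mul_le _ _).trans (mul_le_mul hcomm hQ (norm_nonneg _) hε)
    refine step.trans ?_
    have hlen : ((x :: L1).length : ℝ) = (L1.length : ℝ) + 1 := by
      simp [List.length_cons]
    have hexp : (x :: L1).length - 1 + L2.length = L1.length + L2.length := by
      simp [List.length_cons]
    rw [hexp, hlen]
    rcases Nat.eq_zero_or_pos L1.length with h0 | h0
    · simp [h0]
    · have he : L1.length - 1 + L2.length + 1 = L1.length + L2.length := by omega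
      have hMM : M * M ^ (L1.length - 1 + L2.length) = M ^ (L1.length + L2.length) := by
        rw [← pow_succ', he]
      have h2' : M * ((L1.length : ℝ) * ε * M ^ (L1.length - 1 + L2.length))
          = (L1.length : ℝ) * ε * M ^ (L1.length + L2.length) := by
        rw [← hMM]; ring
      rw [h2']
      exact le_of_eq (by ring)

end Aux

/-- Total displacement cost of a list of positions, with offset `n`. -/
noncomputable def lcost : ℕ → List ℕ → ℝ
  | _, [] => 0
  | n, p :: ps => ((p : ℝ) - n) + lcost (n + 1) ps

lemma lcost_nonneg : ∀ (ps : List ℕ) (n : ℕ), ps.Pairwise (· < ·) →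
    (∀ q ∈ ps, n ≤ q) → 0 ≤ lcost n ps
  | [], _, _, _ => le_refl _
  | p :: ps, n, hp, hb => by
    have h1 : (n : ℝ) ≤ p := Nat.cast_le.mpr (hb p (List.mem_cons_self))
    have h2 : ∀ q ∈ ps, p < q := (List.pairwise_cons.mp hp).1
    have := lcost_nonneg ps (n + 1) (List.pairwise_cons.mp hp).2
      (fun q hq => by have := h2 q hq; have := hb p (List.mem_cons_self); omega)
    simp only [lcost]
    linarith

lemma lcost_pos : ∀ (ps : List ℕ) (n : ℕ), 0 < lcost n ps → ∃ q ∈ ps, n < q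
  | [], n, h => by simp [lcost] at h
  | p :: ps, n, h => by
    by_cases hp : n < p
    · exact ⟨p, List.mem_cons_self, hp⟩
    · have hple : (p : ℝ) - n ≤ 0 := by
        have : p ≤ n := Nat.le_of_not_lt hp
        have := Nat.cast_le (α := ℝ).mpr this
        linarith
      simp only [lcost] at h
      have : 0 < lcost (n + 1) ps := by linarith
      obtain ⟨q, hq, hqlt⟩ := lcost_pos ps (n + 1) this
      exact ⟨q, List.mem_cons_of_mem _ hq, by omega⟩

lemma lcost_map_pred : ∀ (ps : List ℕ) (n : ℕ), (∀ q ∈ ps, 1 ≤ q) →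
    lcost n (ps.map (· - 1)) = lcost (n + 1) ps
  | [], _, _ => rfl
  | p :: ps, n, hb => by
    have hp1 : 1 ≤ p := hb p (List.mem_cons_self)
    have hc : ((p - 1 : ℕ) : ℝ) = (p : ℝ) - 1 := by
      push_cast [hp1]; ring
    simp only [List.map_cons, lcost, hc,
      lcost_map_pred ps (n + 1) (fun q hq => hb q (List.mem_cons_of_mem _ hq))]
    push_cast
    ring

lemma lcost_eq_sum : ∀ (ps : List ℕ) (n : ℕ),
    lcost n ps = ∑ i ∈ Finset.range ps.length, ((ps.getD i 0 : ℝ) - (n + i))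
  | [], n => by simp [lcost]
  | p :: ps, n => by
    rw [List.length_cons, Finset.sum_range_succ']
    simp only [List.getD_cons_succ, List.getD_cons_zero, Nat.cast_zero, add_zero, lcost]
    rw [lcost_eq_sum ps (n + 1)]
    rw [add_comm ((p : ℝ) - n)]
    congr 1
    · apply Finset.sum_congr rfl
      intro i _
      push_cast
      ring

section Rec

variable {R : Type*} [NormedRing R]

lemma aux_rec_pull {M ε : ℝ} (hM : 0 ≤ M) (hε : 0 ≤ ε) (h1 : ‖(1 : R)‖ ≤ 1)
    (a : R) (ha : ‖a‖ ≤ M) :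
    ∀ (k : ℕ) (ps : List ℕ) (L : List R), ps.length = k → ps.Pairwise (· < ·) →
      (∀ q ∈ ps, L[q]? = some a) →
      (∀ x ∈ L, ‖x‖ ≤ M ∧ ‖a * x - x * a‖ ≤ ε) →
      ∃ L' : List R, L'.length + k = L.length ∧ (∀ x ∈ L', ‖x‖ ≤ M) ∧
        ‖L.prod - a ^ k * L'.prod‖ ≤ lcost 0 ps * ε * M ^ (L.length - 2) := by
  intro k
  induction k with
  | zero =>
    intro ps L hlen _ _ hnorm
    rcases List.length_eq_zero_iff.mp hlen with rfl
    exact ⟨L, by simp, fun x hx => (hnorm x hx).1, by simp [lcost]⟩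
  | succ k ih =>
    intro ps L hlen hpw hget hnorm
    rcases ps with _ | ⟨p, ps'⟩
    · simp at hlen
    have hlen' : ps'.length = k := by simpa using hlen
    have hp : L[p]? = some a := hget p (List.mem_cons_self)
    have hplt : p < L.length := by
      rcases List.getElem?_eq_some_iff.mp hp with ⟨h, _⟩
      exact h
    have hpa : L[p] = a := by
      rcases List.getElem?_eq_some_iff.mp hp with ⟨h, h2⟩
      exact h2
    have hgtp : ∀ q ∈ ps', p < q := (List.pairwise_cons.mp hpw).1
    have hpw' : ps'.Pairwise (· < ·) := (List.pairwise_cons.mp hpw).2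
    -- decomposition
    have hdec : L = L.take p ++ a :: L.drop (p + 1) := by
      conv_lhs => rw [← List.take_append_drop p L]
      rw [List.drop_eq_getElem_cons hplt, hpa]
    set L₁ : List R := L.take p ++ L.drop (p + 1) with hL₁
    have hsubL₁ : ∀ x ∈ L₁, x ∈ L := by
      intro x hx
      rcases List.mem_append.mp hx with hx | hx
      · exact List.take_subset _ _ hx
      · exact List.drop_subset _ _ hx
    have hlentake : (L.take p).length = p := by
      rw [List.length_take]
      omega
    have hlen₁ : L₁.length = L.length - 1 := by
      rw [hL₁, List.length_append, hlentake, List.length_drop]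
      omega
    -- pull a to the front
    have hpull := aux_pull_front hM hε h1 a ha (L.take p) (L.drop (p + 1))
      (fun x hx => hnorm x (List.take_subset _ _ hx))
      (fun x hx => (hnorm x (List.drop_subset _ _ hx)).1)
    rw [hlentake] at hpull
    have hpull' : ‖L.prod - a * L₁.prod‖ ≤
        (p : ℝ) * ε * M ^ (p - 1 + (L.drop (p + 1)).length) := by
      calc ‖L.prod - a * L₁.prod‖
          = ‖(L.take p ++ a :: L.drop (p + 1)).prod - a * L₁.prod‖ := by rw [← hdec]
        _ ≤ _ := hpull
    -- positions in L₁
    set qs : List ℕ := ps'.map (· - 1) with hqs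
    have hqslen : qs.length = k := by simp [hqs, hlen']
    have hqspw : qs.Pairwise (· < ·) := by
      rw [hqs, List.pairwise_map]
      refine hpw'.imp_of_mem ?_
      intro x y hx _ hxy
      have := hgtp x hx
      omega
    have hqsget : ∀ r ∈ qs, L₁[r]? = some a := by
      intro r hr
      rcases List.mem_map.mp hr with ⟨q, hq, rfl⟩
      have hpq : p < q := hgtp q hq
      have h1le : (L.take p).length ≤ q - 1 := by rw [hlentake]; omega
      rw [hL₁, List.getElem?_append_right h1le, hlentake, List.getElem?_drop]
      have : p + 1 + (q - 1 - p) = q := by omega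
      rw [this]
      exact hget q (List.mem_cons_of_mem _ hq)
    obtain ⟨L', hL'len, hL'norm, hL'bound⟩ := ih qs L₁ hqslen hqspw hqsget
      (fun x hx => hnorm x (hsubL₁ x hx))
    refine ⟨L', by omega, hL'norm, ?_⟩
    -- splitting of the difference
    have hsplit : L.prod - a ^ (k + 1) * L'.prod
        = (L.prod - a * L₁.prod) + a * (L₁.prod - a ^ k * L'.prod) := by
      rw [mul_sub, ← mul_assoc, ← pow_succ']
      abel
    -- estimate term 1
    have hE1 : (p : ℝ) * ε * M ^ (p - 1 + (L.drop (p + 1)).length) ≤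
        (p : ℝ) * ε * M ^ (L.length - 2) := by
      rcases Nat.eq_zero_or_pos p with rfl | hp0
      · simp
      · rw [List.length_drop]
        have : p - 1 + (L.length - (p + 1)) = L.length - 2 := by omega
        rw [this]
    -- estimate term 2
    set S : ℝ := lcost 0 qs with hS
    have hS0 : 0 ≤ S := lcost_nonneg qs 0 hqspw (fun q _ => Nat.zero_le q)
    have hE2 : M * (S * ε * M ^ (L₁.length - 2)) ≤ S * ε * M ^ (L.length - 2) := by
      rcases eq_or_lt_of_le hS0 with hSz | hSpos
      · rw [← hSz]; simp
      · obtain ⟨r, hr, hrpos⟩ := lcost_pos qs 0 hSpos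
        have hrL : r < L₁.length := by
          rcases List.getElem?_eq_some_iff.mp (hqsget r hr) with ⟨h, _⟩
          exact h
        have hL3 : 3 ≤ L.length := by omega
        have hee : L₁.length - 2 + 1 = L.length - 2 := by omega
        have heq : M * (S * ε * M ^ (L₁.length - 2)) = S * ε * M ^ (L.length - 2) := by
          rw [← hee, pow_succ]; ring
        exact le_of_eq heq
    -- combine
    have hSps : lcost 0 (p :: ps') = (p : ℝ) + S := by
      have : S = lcost 1 ps' := by
        rw [hS, hqs, lcost_map_pred ps' 0 (fun q hq => by have := hgtp q hq; omega)]
      simp only [lcost, this]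
      push_cast
      ring
    calc ‖L.prod - a ^ (k + 1) * L'.prod‖
        = ‖(L.prod - a * L₁.prod) + a * (L₁.prod - a ^ k * L'.prod)‖ := by rw [hsplit]
      _ ≤ ‖L.prod - a * L₁.prod‖ + ‖a‖ * ‖L₁.prod - a ^ k * L'.prod‖ :=
          (norm_add_le _ _).trans (add_le_add le_rfl (norm_mul_le _ _))
      _ ≤ (p : ℝ) * ε * M ^ (L.length - 2) + M * (S * ε * M ^ (L₁.length - 2)) := by
          refine add_le_add (hpull'.trans hE1) ?_
          exact mul_le_mul ha hL'bound (norm_nonneg _) hM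
      _ ≤ (p : ℝ) * ε * M ^ (L.length - 2) + S * ε * M ^ (L.length - 2) :=
          add_le_add le_rfl hE2
      _ = lcost 0 (p :: ps') * ε * M ^ (L.length - 2) := by rw [hSps]; ring

end Rec

lemma gauss_sum_real : ∀ n : ℕ, ∑ i ∈ Finset.range n, ((i : ℝ) + 1) = n * (n + 1) / 2
  | 0 => by simp
  | n + 1 => by
    rw [Finset.sum_range_succ, gauss_sum_real n]
    push_cast
    ring

theorem product_norm_bound_with_rearrangement {d N m : ℕ} (hN : 1 ≤ N) (hm : 1 ≤ m)
    (hNm : 2 ≤ N * m)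
    (Ap : Matrix (Fin d) (Fin d) ℝ) (B : Fin (N * m) → Matrix (Fin d) (Fin d) ℝ)
    (M ε ρ : ℝ) (hM : 0 ≤ M) (hε : 0 ≤ ε) (hρ : 0 ≤ ρ)
    (hAp : opNorm Ap ≤ M)
    (hApm : opNorm (Ap ^ m) ≤ ρ)
    (hB : ∀ i, opNorm (B i) ≤ M)
    (hcomm : ∀ i, opNorm (Ap * B i - B i * Ap) ≤ ε)
    (j : Fin m → Fin (N * m)) (hj : StrictAnti j)
    (hjB : ∀ k, B (j k) = Ap)
    (hjge : ∀ k : Fin m, N * m - (k.val + 1) * N ≤ (j k).val) :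
    opNorm (((List.finRange (N * m)).reverse.map B).prod) ≤
      ρ * M ^ ((N - 1) * m) +
        ((N : ℝ) - 1) * ((m : ℝ) * ((m : ℝ) + 1) / 2) * M ^ (N * m - 2) * ε := by
  classical
  have h1 : ‖(1 : EuclideanSpace ℝ (Fin d) →L[ℝ] EuclideanSpace ℝ (Fin d))‖ ≤ 1 := by
    rw [ContinuousLinearMap.one_def]; exact ContinuousLinearMap.norm_id_le
  obtain ⟨f, hf⟩ : ∃ f' : Matrix (Fin d) (Fin d) ℝ ≃⋆ₐ[ℝ]
      (EuclideanSpace ℝ (Fin d) →L[ℝ] EuclideanSpace ℝ (Fin d)),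
      f' = Matrix.toEuclideanCLM (𝕜 := ℝ) := ⟨_, rfl⟩
  have hopN : ∀ A : Matrix (Fin d) (Fin d) ℝ, opNorm A = ‖f A‖ := by
    intro A; rw [hf]; rfl
  set a := f Ap with hadef
  set L : List (EuclideanSpace ℝ (Fin d) →L[ℝ] EuclideanSpace ℝ (Fin d)) :=
    ((List.finRange (N * m)).reverse.map B).map f with hLdef
  have hgoalL : opNorm (((List.finRange (N * m)).reverse.map B).prod) = ‖L.prod‖ := by
    rw [hopN, map_list_prod, hLdef]
  have hLlen : L.length = N * m := by simp [hLdef]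
  have hLget : ∀ (q : ℕ) (hq : q < L.length), ∃ i : Fin (N * m),
      i.val = N * m - 1 - q ∧ L[q] = f (B i) := by
    intro q hq
    have hq' : q < N * m := by rwa [hLlen] at hq
    have hqr : q < (List.finRange (N * m)).reverse.length := by simpa using hq'
    refine ⟨(List.finRange (N * m)).reverse[q]'hqr, ?_, ?_⟩
    · rw [List.getElem_reverse]
      simp [List.getElem_finRange]
    · simp [hLdef]
  have ha : ‖a‖ ≤ M := by rw [hadef, ← hopN]; exact hAp
  set ps : List ℕ := List.ofFn (fun k : Fin m => N * m - 1 - (j k).val) with hps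
  have hpslen : ps.length = m := by simp [hps]
  have hpsw : ps.Pairwise (· < ·) := by
    rw [hps]
    refine List.pairwise_ofFn.mpr ?_
    intro i i' hii'
    have h1' := hj hii'
    have h2' := (j i).isLt
    have h3' := (j i').isLt
    have h4' : (j i').val < (j i).val := h1'
    omega
  have hpsget : ∀ q ∈ ps, L[q]? = some a := by
    intro q hq
    rw [hps] at hq
    obtain ⟨k, hk⟩ := by simpa using List.mem_ofFn.mp hq
    have hjk := (j k).isLt
    have hqlt : q < L.length := by rw [hLlen]; omega
    rw [List.getElem?_eq_getElem hqlt]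
    obtain ⟨i, hival, higet⟩ := hLget q hqlt
    have hieq : i = j k := by
      apply Fin.ext
      omega
    rw [higet, hieq, hjB k]
  have hnorm : ∀ x ∈ L, ‖x‖ ≤ M ∧ ‖a * x - x * a‖ ≤ ε := by
    intro x hx
    rw [hLdef] at hx
    obtain ⟨A', hA', rfl⟩ := List.mem_map.mp hx
    obtain ⟨i, _, rfl⟩ := List.mem_map.mp hA'
    constructor
    · rw [← hopN]; exact hB i
    · have : a * f (B i) - f (B i) * a = f (Ap * B i - B i * Ap) := by
        rw [map_sub, map_mul, map_mul, hadef]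
      rw [this, ← hopN]
      exact hcomm i
  obtain ⟨L', hL'len, hL'norm, hbound⟩ :=
    aux_rec_pull hM hε h1 a ha m ps L hpslen hpsw hpsget hnorm
  rw [hLlen] at hbound hL'len
  have hL'len' : L'.length = (N - 1) * m := by
    rcases N with _ | n
    · omega
    · have : (n + 1) * m = n * m + m := by rw [Nat.succ_mul]
      simp only [Nat.add_sub_cancel]
      omega
  have ham : ‖a ^ m‖ ≤ ρ := by
    rw [hadef, ← map_pow, ← hopN]
    exact hApm
  have hprod : ‖L'.prod‖ ≤ M ^ ((N - 1) * m) := by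
    rw [← hL'len']
    exact aux_prod_norm_le hM h1 L' hL'norm
  have h2 : ‖a ^ m * L'.prod‖ ≤ ρ * M ^ ((N - 1) * m) :=
    (norm_mul_le _ _).trans (mul_le_mul ham hprod (norm_nonneg _) hρ)
  have tri : ‖L.prod‖ ≤ ‖a ^ m * L'.prod‖ + ‖L.prod - a ^ m * L'.prod‖ := by
    have h' := norm_add_le (L.prod - a ^ m * L'.prod) (a ^ m * L'.prod)
    rw [sub_add_cancel] at h'
    linarith [h']
  have hcost : lcost 0 ps ≤ ((N : ℝ) - 1) * ((m : ℝ) * ((m : ℝ) + 1) / 2) := by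
    rw [lcost_eq_sum, hpslen]
    have hterm : ∀ i ∈ Finset.range m,
        ((ps.getD i 0 : ℝ) - ((0 : ℕ) + i)) ≤ ((i : ℝ) + 1) * ((N : ℝ) - 1) := by
      intro i hi
      have him : i < m := Finset.mem_range.mp hi
      have hilt : i < ps.length := by rw [hpslen]; exact him
      have hgd : ps.getD i 0 = N * m - 1 - (j ⟨i, him⟩).val := by
        rw [List.getD_eq_getElem?_getD, List.getElem?_eq_getElem hilt]
        simp [hps, List.getElem_ofFn]
      rw [hgd]
      have hjv := (j ⟨i, him⟩).isLt
      have hge : N * m - (i + 1) * N ≤ (j ⟨i, him⟩).val := by simpa using hjge ⟨i, him⟩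
      have hge' : N * m ≤ (j ⟨i, him⟩).val + (i + 1) * N :=
        Nat.sub_le_iff_le_add.mp hge
      have ht1 : 1 ≤ (i + 1) * N := by
        calc 1 = 1 * 1 := by ring
          _ ≤ (i + 1) * N := Nat.mul_le_mul (by omega) hN
      have hnat : N * m - 1 - (j ⟨i, him⟩).val ≤ (i + 1) * N - 1 := by omega
      have hcast : ((N * m - 1 - (j ⟨i, him⟩).val : ℕ) : ℝ) ≤ ((i + 1) * N : ℕ) - 1 := by
        have := Nat.cast_le (α := ℝ) |>.mpr hnat
        have h2c : (((i + 1) * N - 1 : ℕ) : ℝ) = ((i + 1) * N : ℕ) - 1 := by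
          push_cast [ht1]; ring
        linarith [h2c ▸ this]
      have : (((i + 1) * N : ℕ) : ℝ) = ((i : ℝ) + 1) * N := by push_cast; ring
      rw [this] at hcast
      push_cast
      nlinarith [hcast]
    calc ∑ i ∈ Finset.range m, ((ps.getD i 0 : ℝ) - ((0 : ℕ) + i))
        ≤ ∑ i ∈ Finset.range m, ((i : ℝ) + 1) * ((N : ℝ) - 1) := Finset.sum_le_sum hterm
      _ = (∑ i ∈ Finset.range m, ((i : ℝ) + 1)) * ((N : ℝ) - 1) := by
          rw [Finset.sum_mul]
      _ = ((N : ℝ) - 1) * ((m : ℝ) * ((m : ℝ) + 1) / 2) := by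
          rw [gauss_sum_real]; ring
  have h0c : 0 ≤ lcost 0 ps := lcost_nonneg ps 0 hpsw (fun q _ => Nat.zero_le q)
  have hfin : lcost 0 ps * ε * M ^ (N * m - 2) ≤
      ((N : ℝ) - 1) * ((m : ℝ) * ((m : ℝ) + 1) / 2) * M ^ (N * m - 2) * ε := by
    have hmp : 0 ≤ M ^ (N * m - 2) := pow_nonneg hM _
    have := mul_le_mul_of_nonneg_right (mul_le_mul_of_nonneg_right hcost hε) hmp
    linarith [this]
  rw [hgoalL]
  calc ‖L.prod‖ ≤ ‖a ^ m * L'.prod‖ + ‖L.prod - a ^ m * L'.prod‖ := tri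
    _ ≤ ρ * M ^ ((N - 1) * m) + lcost 0 ps * ε * M ^ (N * m - 2) := add_le_add h2 hbound
    _ ≤ _ := by linarith [hfin]
end

section
/- Let P = {1, …, N} with N ≥ 1, let A_i (i ∈ P) be d×d real matrices, and let m ≥ 1 with N·m ≥ 2. Let M ≥ 0, ρ ≥ 0, ε ≥ 0 and suppose there is p ∈ P such that: ‖A_i‖ ≤ M for all i ∈ P; ‖A_p^m‖ ≤ ρ; ‖A_p A_i − A_i A_p‖ ≤ ε for all i ∈ P with i ≠ p; and there exists γ > 0 with ρ · M^{(N−1)m} + (N−1) · (m(m+1)/2) · M^{Nm−2} · ε ≤ e^{−γNm}. Let σ : ℕ → P be a switching signal whose corresponding infinite walk is a concatenation of cycles through p starting at p: there is a strictly increasing sequence t_0 < t_1 < t_2 < ⋯ in ℕ with t_0 = 0 such that for every j, σ(t_j) = p and σ is injective on the block {t_j, t_j + 1, …, t_{j+1} − 1} (so in particular t_{j+1} − t_j ≤ N, since P has N elements). Then there exists c > 0 such that ‖A_{σ(t−1)} ⋯ A_{σ(1)} A_{σ(0)}‖ ≤ c e^{−γt} for all t ≥ 1, i.e., the switched system is globally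 exponentially stable under σ. -/
/-- The state-transition matrix `Φ t = A (σ (t-1)) * ⋯ * A (σ 1) * A (σ 0)` of a
discrete-time switched linear system. -/
noncomputable def transitionMatrix {d : ℕ} {P : Type*} (A : P → Matrix (Fin d) (Fin d) ℝ)
    (σ : ℕ → P) (t : ℕ) : Matrix (Fin d) (Fin d) ℝ :=
  ((List.range t).reverse.map (fun i => A (σ i))).prod

namespace GESaux

variable {d : ℕ} {P : Type*}

lemma opNorm_nonneg (A : Matrix (Fin d) (Fin d) ℝ) : 0 ≤ opNorm A := norm_nonneg _

lemma opNorm_mul_le (A B : Matrix (Fin d) (Fin d) ℝ) : opNorm (A*B) ≤ opNorm A * opNorm B := by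
  simp only [opNorm, map_mul]; exact norm_mul_le _ _

lemma opNorm_one_le : opNorm (1 : Matrix (Fin d) (Fin d) ℝ) ≤ 1 := by
  simp only [opNorm, map_one, ContinuousLinearMap.one_def]
  exact ContinuousLinearMap.norm_id_le

lemma opNorm_zero : opNorm (0 : Matrix (Fin d) (Fin d) ℝ) = 0 := by
  simp only [opNorm, map_zero, norm_zero]

lemma opNorm_add_le (A B : Matrix (Fin d) (Fin d) ℝ) : opNorm (A+B) ≤ opNorm A + opNorm B := by
  simp only [opNorm, map_add]; exact norm_add_le _ _

lemma opNorm_prod_le (l : List (Matrix (Fin d) (Fin d) ℝ)) (C : ℝ) (hC : 0 ≤ C)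
    (h : ∀ B ∈ l, opNorm B ≤ C) : opNorm l.prod ≤ C ^ l.length := by
  induction l with
  | nil => simpa using opNorm_one_le
  | cons B l ih =>
    have h1 : opNorm (B * l.prod) ≤ opNorm B * opNorm l.prod := opNorm_mul_le _ _
    have h2 : opNorm l.prod ≤ C ^ l.length := ih (fun x hx => h x (List.mem_cons_of_mem _ hx))
    have h3 : opNorm B ≤ C := h B List.mem_cons_self
    calc opNorm (B :: l).prod = opNorm (B * l.prod) := by simp
    _ ≤ opNorm B * opNorm l.prod := h1
    _ ≤ C * C ^ l.length := by
        exact mul_le_mul h3 h2 (opNorm_nonneg _) hC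
    _ = C ^ (B :: l).length := by rw [List.length_cons, pow_succ]; ring

lemma opNorm_pow_le (A : Matrix (Fin d) (Fin d) ℝ) (C : ℝ) (hC : 0 ≤ C)
    (h : opNorm A ≤ C) (n : ℕ) : opNorm (A ^ n) ≤ C ^ n := by
  induction n with
  | zero => simpa using opNorm_one_le
  | succ n ih =>
    calc opNorm (A ^ (n+1)) = opNorm (A * A ^ n) := by rw [pow_succ']
    _ ≤ opNorm A * opNorm (A ^ n) := opNorm_mul_le _ _
    _ ≤ C * C ^ n := mul_le_mul h ih (opNorm_nonneg _) hC
    _ = C ^ (n+1) := by rw [pow_succ]; ring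

lemma comm_prod (Ap : Matrix (Fin d) (Fin d) ℝ) (M ε : ℝ) (hM : 0 ≤ M) (hε : 0 ≤ ε)
    (hAp : opNorm Ap ≤ M) (l : List (Matrix (Fin d) (Fin d) ℝ))
    (h : ∀ B ∈ l, opNorm B ≤ M ∧ opNorm (Ap*B - B*Ap) ≤ ε) :
    opNorm (Ap * l.prod - l.prod * Ap) * M ≤ l.length * ε * M ^ l.length := by
  induction l with
  | nil => simp [opNorm_zero]
  | cons B l ih =>
    have hB := h B List.mem_cons_self
    have hl : ∀ x ∈ l, opNorm x ≤ M ∧ opNorm (Ap*x - x*Ap) ≤ ε :=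
      fun x hx => h x (List.mem_cons_of_mem _ hx)
    have ihl := ih hl
    have hLP : opNorm l.prod ≤ M ^ l.length := opNorm_prod_le l M hM (fun x hx => (hl x hx).1)
    have key : Ap * (B :: l).prod - (B :: l).prod * Ap
        = (Ap*B - B*Ap) * l.prod + B * (Ap * l.prod - l.prod * Ap) := by
      simp only [List.prod_cons]
      noncomm_ring
    have h1 : opNorm ((Ap*B - B*Ap) * l.prod) ≤ ε * M ^ l.length := by
      calc opNorm ((Ap*B - B*Ap) * l.prod) ≤ opNorm (Ap*B - B*Ap) * opNorm l.prod :=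
            opNorm_mul_le _ _
      _ ≤ ε * M ^ l.length := mul_le_mul hB.2 hLP (opNorm_nonneg _) hε
    have h2 : opNorm (B * (Ap * l.prod - l.prod * Ap)) ≤ M * opNorm (Ap * l.prod - l.prod * Ap) :=
      calc opNorm (B * (Ap * l.prod - l.prod * Ap))
          ≤ opNorm B * opNorm (Ap * l.prod - l.prod * Ap) := opNorm_mul_le _ _
      _ ≤ M * opNorm (Ap * l.prod - l.prod * Ap) :=
          mul_le_mul_of_nonneg_right hB.1 (opNorm_nonneg _)
    calc opNorm (Ap * (B :: l).prod - (B :: l).prod * Ap) * M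
        ≤ (ε * M ^ l.length + M * opNorm (Ap * l.prod - l.prod * Ap)) * M := by
          apply mul_le_mul_of_nonneg_right _ hM
          rw [key]
          exact (opNorm_add_le _ _).trans (add_le_add h1 h2)
    _ = ε * M ^ (l.length + 1) + M * (opNorm (Ap * l.prod - l.prod * Ap) * M) := by
          rw [pow_succ]; ring
    _ ≤ ε * M ^ (l.length + 1) + M * (l.length * ε * M ^ l.length) := by
          exact add_le_add le_rfl (mul_le_mul_of_nonneg_left ihl hM)
    _ ≤ (B :: l).length * ε * M ^ (B :: l).length := by
          simp only [List.length_cons, pow_succ]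
          push_cast
          nlinarith [pow_nonneg hM l.length, mul_nonneg hε (pow_nonneg hM l.length)]

/-- list of matrices over the time window `[a, a+n)`, latest first -/
def blockList (A : P → Matrix (Fin d) (Fin d) ℝ) (σ : ℕ → P) (a n : ℕ) :
    List (Matrix (Fin d) (Fin d) ℝ) :=
  ((List.range' a n).reverse.map (fun i => A (σ i)))

noncomputable def blockProd (A : P → Matrix (Fin d) (Fin d) ℝ) (σ : ℕ → P) (a n : ℕ) :
    Matrix (Fin d) (Fin d) ℝ := (blockList A σ a n).prod

lemma transitionMatrix_eq (A : P → Matrix (Fin d) (Fin d) ℝ) (σ : ℕ → P) (s : ℕ) :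
    transitionMatrix A σ s = blockProd A σ 0 s := by
  simp [transitionMatrix, blockProd, blockList, List.range_eq_range']

lemma blockList_append (A : P → Matrix (Fin d) (Fin d) ℝ) (σ : ℕ → P) (a n₁ n₂ : ℕ) :
    blockList A σ a (n₁ + n₂) = blockList A σ (a + n₁) n₂ ++ blockList A σ a n₁ := by
  have h : List.range' a (n₁ + n₂) = List.range' a n₁ ++ List.range' (a + n₁) n₂ := by
    have h2 := (List.range'_append : List.range' a n₁ 1 ++ List.range' (a + 1 * n₁) n₂ 1 = _)
    simp only [one_mul] at h2
    rw [← h2]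
  rw [blockList, h, List.reverse_append, List.map_append]
  rfl

lemma blockProd_append (A : P → Matrix (Fin d) (Fin d) ℝ) (σ : ℕ → P) (a n₁ n₂ : ℕ) :
    blockProd A σ a (n₁ + n₂) = blockProd A σ (a + n₁) n₂ * blockProd A σ a n₁ := by
  simp [blockProd, blockList_append]

lemma blockProd_one (A : P → Matrix (Fin d) (Fin d) ℝ) (σ : ℕ → P) (a : ℕ) :
    blockProd A σ a 1 = A (σ a) := by
  simp [blockProd, blockList]

lemma blockProd_zero (A : P → Matrix (Fin d) (Fin d) ℝ) (σ : ℕ → P) (a : ℕ) :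
    blockProd A σ a 0 = 1 := by
  simp [blockProd, blockList]

end GESaux

namespace GESaux

variable {d N : ℕ}

lemma blockList_length (A : P → Matrix (Fin d) (Fin d) ℝ) (σ : ℕ → P) (a n : ℕ) :
    (blockList A σ a n).length = n := by simp [blockList]

lemma blockList_mem {P : Type*} (A : P → Matrix (Fin d) (Fin d) ℝ) (σ : ℕ → P) (a n : ℕ)
    (B : Matrix (Fin d) (Fin d) ℝ) (hB : B ∈ blockList A σ a n) :
    ∃ i, a ≤ i ∧ i < a + n ∧ B = A (σ i) := by
  simp only [blockList, List.mem_map, List.mem_reverse, List.mem_range'_1] at hB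
  obtain ⟨i, ⟨h1, h2⟩, h3⟩ := hB
  exact ⟨i, h1, h2, h3.symm⟩

section Main

variable (A : Fin N → Matrix (Fin d) (Fin d) ℝ) (p : Fin N) (M ε : ℝ)
  (σ : ℕ → Fin N) (t : ℕ → ℕ)

variable (hN : 1 ≤ N) (hM : 0 ≤ M) (hε : 0 ≤ ε)
  (hA : ∀ i, opNorm (A i) ≤ M)
  (hcomm : ∀ i, i ≠ p → opNorm (A p * A i - A i * A p) ≤ ε)
  (ht_mono : StrictMono t)
  (ht_p : ∀ j : ℕ, σ (t j) = p)
  (ht_inj : ∀ j : ℕ, Set.InjOn σ (Set.Ico (t j) (t (j + 1))))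

include ht_mono ht_inj in
lemma cycle_le : ∀ j, t (j+1) - t j ≤ N := by
  intro j
  have h1 : (Finset.Ico (t j) (t (j+1))).card ≤ (Finset.univ : Finset (Fin N)).card := by
    apply Finset.card_le_card_of_injOn σ (fun a _ => Finset.mem_univ _)
    simpa using ht_inj j
  simpa using h1

include ht_mono ht_inj in
lemma t_add_le : ∀ j k, t (j + k) ≤ t j + k * N := by
  intro j k
  induction k with
  | zero => simp
  | succ k ih =>
    have h1 : t (j+k+1) - t (j+k) ≤ N := cycle_le σ t ht_mono ht_inj (j+k)
    have h2 : t (j+k) < t (j+k+1) := ht_mono (Nat.lt_succ_self _)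
    calc t (j + (k+1)) = t (j+k+1) := rfl
    _ ≤ t (j+k) + N := by omega
    _ ≤ (t j + k*N) + N := Nat.add_le_add_right ih N
    _ = t j + (k+1)*N := by ring

include hN hM hε hA hcomm ht_mono ht_p ht_inj in
lemma group_decomp (J : ℕ) : ∀ i : ℕ, ∃ (l : List (Matrix (Fin d) (Fin d) ℝ))
    (E : Matrix (Fin d) (Fin d) ℝ) (s : ℕ),
    blockProd A σ (t J) (t (J+i) - t J) = l.prod * (A p)^i + E ∧
    (∀ B ∈ l, opNorm B ≤ M ∧ opNorm (A p * B - B * A p) ≤ ε) ∧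
    l.length + i = t (J+i) - t J ∧
    l.length ≤ (N-1) * i ∧
    opNorm E * M^2 ≤ ε * s * M ^ (t (J+i) - t J) ∧
    2 * s ≤ (N-1) * i * (i-1) := by
  intro i
  induction i with
  | zero =>
    refine ⟨[], 0, 0, ?_, by simp, by simp, by simp, by simp [opNorm_zero], by simp⟩
    simp [blockProd_zero]
  | succ i IH =>
    rw [show t (J + (i+1)) = t (J + i + 1) from rfl]
    obtain ⟨l, E, s, hEq, hl, hlen, hlenN, hE, hs⟩ := IH
    set a := t (J + i) with ha
    set a' := t (J + i + 1) with ha'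
    have haa' : a < a' := ht_mono (Nat.lt_succ_self _)
    have htJa : t J ≤ a := ht_mono.le_iff_le.mpr (Nat.le_add_right _ _)
    have hcyc : a' - a ≤ N := by
      have := cycle_le σ t ht_mono ht_inj (J + i)
      simpa using this
    set bc := a' - a - 1 with hbc
    have hbc1 : a' - a = bc + 1 := by omega
    set lc := blockList A σ (a+1) bc with hlc
    have hlc_len : lc.length = bc := blockList_length A σ _ _
    have hlc_mem : ∀ B ∈ lc, opNorm B ≤ M ∧ opNorm (A p * B - B * A p) ≤ ε := by
      intro B hB
      obtain ⟨u, hu1, hu2, hu3⟩ := blockList_mem A σ _ _ B hB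
      subst hu3
      refine ⟨hA _, ?_⟩
      have hup : σ u ≠ p := by
        intro hup
        have h1 : u ∈ Set.Ico (t (J+i)) (t (J+i+1)) := by
          constructor <;> omega
        have h2 : t (J+i) ∈ Set.Ico (t (J+i)) (t (J+i+1)) := by
          constructor <;> omega
        have := ht_inj (J+i) h1 h2 (by rw [hup, ht_p])
        omega
      exact hcomm _ hup
    -- split the product
    have hsplit : blockProd A σ (t J) (t (J + i + 1) - t J)
        = (lc.prod * A p) * blockProd A σ (t J) (a - t J) := by
      have h1 : t (J + i + 1) - t J = (a - t J) + (bc + 1) := by omega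
      rw [h1, blockProd_append]
      have h2 : t J + (a - t J) = a := by omega
      rw [h2]
      have h3 : blockProd A σ a (bc + 1) = lc.prod * A p := by
        have h4 : bc + 1 = 1 + bc := by omega
        rw [h4, blockProd_append]
        rw [blockProd_one, ht_p (J+i)]
        rfl
      rw [h3]
    refine ⟨lc ++ l,
      lc.prod * (A p * l.prod - l.prod * A p) * (A p)^i + lc.prod * (A p * E), s + l.length,
      ?_, ?_, ?_, ?_, ?_, ?_⟩
    · rw [hsplit, hEq, List.prod_append]
      have hps : (A p)^(i+1) = A p * (A p)^i := by rw [pow_succ']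
      rw [hps]
      noncomm_ring
    · intro B hB
      rcases List.mem_append.mp hB with h | h
      · exact hlc_mem B h
      · exact hl B h
    · rw [List.length_append, hlc_len]
      omega
    · rw [List.length_append, hlc_len]
      have : bc ≤ N - 1 := by omega
      calc bc + l.length ≤ (N-1) + (N-1)*i := by omega
      _ = (N-1)*(i+1) := by ring
    · -- the error bound
      have hτ' : t (J + i + 1) - t J = bc + 1 + (a - t J) := by omega
      set k := l.length with hk
      set Δ := A p * l.prod - l.prod * A p with hΔdef
      have hΔ : opNorm Δ * M ≤ k * ε * M ^ k := comm_prod (A p) M ε hM hε (hA p) l hl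
      have hBc : opNorm lc.prod ≤ M ^ bc := by
        have h5 := opNorm_prod_le lc M hM (fun B hB => (hlc_mem B hB).1)
        rwa [hlc_len] at h5
      have hApi : opNorm ((A p)^i) ≤ M ^ i := opNorm_pow_le _ M hM (hA p) i
      have hM2 : (0:ℝ) ≤ M^2 := sq_nonneg M
      have h1 : opNorm (lc.prod * Δ * (A p)^i) * M^2 ≤ (k * ε) * (M ^ (bc + 1 + (k + i))) := by
        have e1 : opNorm (lc.prod * Δ * (A p)^i) ≤ (M^bc * opNorm Δ) * M^i := by
          calc opNorm (lc.prod * Δ * (A p)^i) ≤ opNorm (lc.prod * Δ) * opNorm ((A p)^i) :=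
                opNorm_mul_le _ _
          _ ≤ (M^bc * opNorm Δ) * M^i := by
              apply mul_le_mul _ hApi (opNorm_nonneg _)
                (mul_nonneg (pow_nonneg hM bc) (opNorm_nonneg _))
              calc opNorm (lc.prod * Δ) ≤ opNorm lc.prod * opNorm Δ := opNorm_mul_le _ _
              _ ≤ M^bc * opNorm Δ := mul_le_mul_of_nonneg_right hBc (opNorm_nonneg _)
        calc opNorm (lc.prod * Δ * (A p)^i) * M^2 ≤ ((M^bc * opNorm Δ) * M^i) * M^2 :=
              mul_le_mul_of_nonneg_right e1 hM2
        _ = (M^bc * M^i * M) * (opNorm Δ * M) := by ring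
        _ ≤ (M^bc * M^i * M) * (k * ε * M^k) := by
            apply mul_le_mul_of_nonneg_left hΔ (by positivity)
        _ = (k * ε) * (M ^ (bc + 1 + (k + i))) := by
            rw [pow_add, pow_add, pow_add, pow_one]; ring
      have h2 : opNorm (lc.prod * (A p * E)) * M^2 ≤ (ε * s) * (M ^ (bc + 1 + (a - t J))) := by
        have e2 : opNorm (lc.prod * (A p * E)) ≤ M^bc * (M * opNorm E) := by
          calc opNorm (lc.prod * (A p * E)) ≤ opNorm lc.prod * opNorm (A p * E) :=
                opNorm_mul_le _ _
          _ ≤ M^bc * (M * opNorm E) := by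
              apply mul_le_mul hBc _ (opNorm_nonneg _) (pow_nonneg hM bc)
              calc opNorm (A p * E) ≤ opNorm (A p) * opNorm E := opNorm_mul_le _ _
              _ ≤ M * opNorm E := mul_le_mul_of_nonneg_right (hA p) (opNorm_nonneg _)
        calc opNorm (lc.prod * (A p * E)) * M^2 ≤ (M^bc * (M * opNorm E)) * M^2 :=
              mul_le_mul_of_nonneg_right e2 hM2
        _ = (M^bc * M) * (opNorm E * M^2) := by ring
        _ ≤ (M^bc * M) * (ε * s * M^(a - t J)) := by
            apply mul_le_mul_of_nonneg_left hE (by positivity)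
        _ = (ε * s) * (M ^ (bc + 1 + (a - t J))) := by rw [pow_add, pow_add, pow_one]; ring
      have hka : k + i = a - t J := hlen
      calc opNorm (lc.prod * Δ * (A p)^i + lc.prod * (A p * E)) * M^2
          ≤ (opNorm (lc.prod * Δ * (A p)^i) + opNorm (lc.prod * (A p * E))) * M^2 :=
            mul_le_mul_of_nonneg_right (opNorm_add_le _ _) hM2
      _ = opNorm (lc.prod * Δ * (A p)^i) * M^2 + opNorm (lc.prod * (A p * E)) * M^2 := by ring
      _ ≤ (k * ε) * (M ^ (bc + 1 + (k + i))) + (ε * s) * (M ^ (bc + 1 + (a - t J))) :=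
            add_le_add h1 h2
      _ = ε * (↑(s + k)) * M ^ (t (J + i + 1) - t J) := by
          rw [hka, hτ']
          push_cast
          ring
    · have : l.length + i = a - t J := hlen
      have hub : a - t J ≤ i * N := by
        have := t_add_le σ t ht_mono ht_inj J i
        omega
      have hlN : l.length ≤ (N-1) * i := hlenN
      calc 2 * (s + l.length) ≤ (N-1)*i*(i-1) + 2*((N-1)*i) := by omega
      _ ≤ (N-1)*(i+1)*(i+1-1) := by
          rcases Nat.eq_zero_or_pos i with h | h
          · subst h; simp
          · have h1 : i - 1 + 2 = i + 1 := by omega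
            have : (N-1)*i*(i-1) + 2*((N-1)*i) = (N-1)*i*((i-1)+2) := by ring
            rw [this, h1]
            simp
            nlinarith [Nat.le_refl i]


include hA in
lemma opNorm_blockProd_le (C : ℝ) (hC : 0 ≤ C) (hAC : M ≤ C) (a n : ℕ) :
    opNorm (blockProd A σ a n) ≤ C ^ n := by
  have h := opNorm_prod_le (blockList A σ a n) C hC ?_
  · rwa [blockList_length] at h
  · intro B hB
    obtain ⟨u, _, _, hu⟩ := blockList_mem A σ a n B hB
    subst hu
    exact (hA _).trans hAC

end Main

section Main2

variable (A : Fin N → Matrix (Fin d) (Fin d) ℝ) (p : Fin N) {m : ℕ} (M ρ ε γ : ℝ)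
  (σ : ℕ → Fin N) (t : ℕ → ℕ)

variable (hN : 1 ≤ N) (hm : 1 ≤ m) (hNm : 2 ≤ N * m)
  (hM : 0 ≤ M) (hρ : 0 ≤ ρ) (hε : 0 ≤ ε) (hγ : 0 < γ)
  (hA : ∀ i, opNorm (A i) ≤ M)
  (hApm : opNorm (A p ^ m) ≤ ρ)
  (hcomm : ∀ i, i ≠ p → opNorm (A p * A i - A i * A p) ≤ ε)
  (hkey : ρ * M ^ ((N - 1) * m) +
      ((N : ℝ) - 1) * ((m : ℝ) * ((m : ℝ) + 1) / 2) * M ^ (N * m - 2) * ε ≤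
      Real.exp (-γ * (N * m : ℕ)))
  (ht_mono : StrictMono t) (ht0 : t 0 = 0)
  (ht_p : ∀ j : ℕ, σ (t j) = p)
  (ht_inj : ∀ j : ℕ, Set.InjOn σ (Set.Ico (t j) (t (j + 1))))

include hN hm hNm hM hρ hε hγ hA hApm hcomm hkey ht_mono ht_p ht_inj in
lemma group_bound (J : ℕ) :
    opNorm (blockProd A σ (t J) (t (J+m) - t J)) ≤ Real.exp (-γ) ^ (t (J+m) - t J) := by
  set K := Real.exp (-γ) with hKdef
  have hK0 : 0 < K := Real.exp_pos _
  rcases le_total M K with hMK | hKM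
  · exact (opNorm_blockProd_le A M σ hA K hK0.le hMK _ _)
  · obtain ⟨l, E, s, hEq, hl, hlen, hlenN, hE, hs⟩ :=
      group_decomp A p M ε σ t hN hM hε hA hcomm ht_mono ht_p ht_inj J m
    have hM0 : 0 < M := lt_of_lt_of_le hK0 hKM
    set T := t (J+m) - t J with hTdef
    have hTle : T ≤ N * m := by
      have h1 := t_add_le σ t ht_mono ht_inj J m
      have h2 : m * N = N * m := Nat.mul_comm _ _
      omega
    set e := N * m - T with hedef
    set k := l.length with hkdef
    have hkm : k + m = T := hlen
    have hke : k + e = (N-1) * m := by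
      have h3 : (N-1) * m = N * m - 1 * m := Nat.sub_mul N 1 m
      omega
    have hTe : T + e = N * m := by omega
    -- norm of the group product
    have hLP : opNorm l.prod ≤ M ^ k := opNorm_prod_le l M hM (fun B hB => (hl B hB).1)
    have hG1 : opNorm (blockProd A σ (t J) T) ≤ M ^ k * ρ + opNorm E := by
      rw [hEq]
      refine (opNorm_add_le _ _).trans (add_le_add ?_ le_rfl)
      exact (opNorm_mul_le _ _).trans
        (mul_le_mul hLP hApm (opNorm_nonneg _) (pow_nonneg hM _))
    have hEb : opNorm E ≤ ε * s * M ^ T / M ^ 2 := by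
      rw [le_div_iff₀ (by positivity)]
      exact hE
    -- multiply by M^e and compare with hkey
    have hscast : (s : ℝ) ≤ ((N:ℝ)-1) * ((m:ℝ) * ((m:ℝ)+1) / 2) := by
      have h4 : (2 * s : ℕ) ≤ ((N-1) * m * (m-1) : ℕ) := hs
      have h5 : ((N-1) * m * (m-1) : ℕ) ≤ (N-1) * m * (m+1) := by
        apply Nat.mul_le_mul_left
        omega
      have h6 : ((2 * s : ℕ) : ℝ) ≤ (((N-1) * m * (m+1) : ℕ) : ℝ) := by
        exact_mod_cast h4.trans h5
      have h7 : (((N-1) : ℕ) : ℝ) = (N:ℝ) - 1 := by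
        rw [Nat.cast_sub hN]; norm_num
      push_cast at h6
      rw [h7] at h6
      linarith
    have hMe : (0:ℝ) < M ^ e := pow_pos hM0 _
    have hQ : opNorm (blockProd A σ (t J) T) * M ^ e ≤ K ^ (N * m) := by
      have hKNm : Real.exp (-γ * (N * m : ℕ)) = K ^ (N * m) := by
        rw [hKdef, ← Real.exp_nat_mul]
        ring_nf
      calc opNorm (blockProd A σ (t J) T) * M ^ e ≤ (M ^ k * ρ + ε * s * M ^ T / M ^ 2) * M ^ e := by
            apply mul_le_mul_of_nonneg_right _ hMe.le
            exact hG1.trans (add_le_add le_rfl hEb)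
      _ = ρ * M ^ (k + e) + ε * s * (M ^ (T + e) / M ^ 2) := by
            rw [pow_add, pow_add]; ring
      _ = ρ * M ^ ((N-1)*m) + ε * s * M ^ (N*m - 2) := by
            have hpow : M ^ (N*m) / M ^ 2 = M ^ (N*m - 2) := by
              rw [div_eq_iff (by positivity : (M:ℝ)^2 ≠ 0), ← pow_add]
              congr 1
              omega
            rw [hke, hTe, hpow]
      _ ≤ ρ * M ^ ((N-1)*m) + ((N:ℝ)-1) * ((m:ℝ) * ((m:ℝ)+1) / 2) * M ^ (N*m - 2) * ε := by
            refine add_le_add le_rfl ?_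
            calc ε * s * M ^ (N*m-2) ≤ ε * (((N:ℝ)-1) * ((m:ℝ) * ((m:ℝ)+1) / 2)) * M ^ (N*m-2) := by
                  apply mul_le_mul_of_nonneg_right _ (pow_nonneg hM _)
                  exact mul_le_mul_of_nonneg_left hscast hε
            _ = ((N:ℝ)-1) * ((m:ℝ) * ((m:ℝ)+1) / 2) * M ^ (N*m-2) * ε := by ring
      _ ≤ K ^ (N * m) := by rw [← hKNm]; exact hkey
    -- conclude
    have hKe : K ^ e ≤ M ^ e := pow_le_pow_left₀ hK0.le hKM e
    have hfin : opNorm (blockProd A σ (t J) T) * K ^ e ≤ K ^ T * K ^ e := by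
      calc opNorm (blockProd A σ (t J) T) * K ^ e ≤ opNorm (blockProd A σ (t J) T) * M ^ e :=
            mul_le_mul_of_nonneg_left hKe (opNorm_nonneg _)
      _ ≤ K ^ (N * m) := hQ
      _ = K ^ T * K ^ e := by rw [← pow_add, hTe]
    exact le_of_mul_le_mul_right hfin (pow_pos hK0 e)


include hN hm hNm hM hρ hε hγ hA hApm hcomm hkey ht_mono ht0 ht_p ht_inj in
lemma phi_bound : ∀ g : ℕ, opNorm (blockProd A σ 0 (t (g*m))) ≤ Real.exp (-γ) ^ (t (g*m)) := by
  intro g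
  induction g with
  | zero => simpa [Nat.zero_mul, ht0, blockProd_zero] using opNorm_one_le
  | succ g ih =>
    rw [show (g+1)*m = g*m + m from by ring]
    set u := t (g*m) with hu
    set v := t (g*m + m) with hv
    have huv : u ≤ v := ht_mono.le_iff_le.mpr (by omega)
    have hsplit : blockProd A σ 0 v = blockProd A σ u (v - u) * blockProd A σ 0 u := by
      conv_lhs => rw [show v = u + (v - u) from by omega]
      rw [blockProd_append, Nat.zero_add]
    have hgb := group_bound A p M ρ ε γ σ t hN hm hNm hM hρ hε hγ hA hApm hcomm hkey
      ht_mono ht_p ht_inj (g*m)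
    rw [hsplit]
    calc opNorm (blockProd A σ u (v - u) * blockProd A σ 0 u)
        ≤ opNorm (blockProd A σ u (v - u)) * opNorm (blockProd A σ 0 u) := opNorm_mul_le _ _
    _ ≤ Real.exp (-γ) ^ (v - u) * Real.exp (-γ) ^ u := by
        apply mul_le_mul hgb ih (opNorm_nonneg _) (pow_nonneg (Real.exp_pos _).le _)
    _ = Real.exp (-γ) ^ v := by rw [← pow_add]; congr 1; omega

include hN hm hNm hM hρ hε hγ hA hApm hcomm hkey ht_mono ht0 ht_p ht_inj in
theorem main_ges :
    ∃ c : ℝ, 0 < c ∧ ∀ s : ℕ, 1 ≤ s →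
      opNorm (transitionMatrix A σ s) ≤ c * Real.exp (-γ * s) := by
  set K := Real.exp (-γ) with hKdef
  have hK0 : 0 < K := Real.exp_pos _
  have hK1 : K ≤ 1 := by
    rw [hKdef]
    exact (Real.exp_le_one_iff).mpr (by linarith)
  set M₁ := max 1 M with hM₁
  have hM₁1 : (1:ℝ) ≤ M₁ := le_max_left _ _
  refine ⟨M₁ ^ (N*m) / K ^ (N*m), by positivity, ?_⟩
  intro s hs
  have hex : ∃ g, s < t ((g+1)*m) := by
    refine ⟨s, ?_⟩
    have h1 : s + 1 ≤ (s+1)*m := Nat.le_mul_of_pos_right _ hm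
    have h2 : (s+1)*m ≤ t ((s+1)*m) := ht_mono.le_apply
    omega
  have hg2 : s < t ((Nat.find hex + 1)*m) := Nat.find_spec hex
  set g := Nat.find hex with hg
  have hg1 : t (g*m) ≤ s := by
    rcases Nat.eq_zero_or_pos g with h | h
    · rw [h, Nat.zero_mul, ht0]; omega
    · have h2 := Nat.find_min hex (m := g-1) (by omega)
      push_neg at h2
      have hgg : (g-1+1) = g := by omega
      rw [hgg] at h2
      exact h2
  have hblock : s - t (g*m) ≤ N*m := by
    have h1 := t_add_le σ t ht_mono ht_inj (g*m) m
    have hg2' : s < t (g*m + m) := by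
      rw [show g*m + m = (g+1)*m from by ring]
      exact hg2
    have h3 : m * N = N * m := Nat.mul_comm _ _
    omega
  have hsplit : transitionMatrix A σ s
      = blockProd A σ (t (g*m)) (s - t (g*m)) * blockProd A σ 0 (t (g*m)) := by
    rw [transitionMatrix_eq]
    conv_lhs => rw [show s = t (g*m) + (s - t (g*m)) from by omega]
    rw [blockProd_append, Nat.zero_add]
  have hb1 : opNorm (blockProd A σ (t (g*m)) (s - t (g*m))) ≤ M₁ ^ (s - t (g*m)) :=
    opNorm_blockProd_le A M σ hA M₁ (by positivity) (le_max_right _ _) _ _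
  have hb2 : opNorm (blockProd A σ 0 (t (g*m))) ≤ K ^ (t (g*m)) :=
    phi_bound A p M ρ ε γ σ t hN hm hNm hM hρ hε hγ hA hApm hcomm hkey
      ht_mono ht0 ht_p ht_inj g
  have hKt : K ^ (t (g*m)) ≤ K ^ s / K ^ (N*m) := by
    have h1 : K ^ s = K ^ (t (g*m)) * K ^ (s - t (g*m)) := by
      rw [← pow_add]; congr 1; omega
    have h2 : K ^ (N*m) ≤ K ^ (s - t (g*m)) := pow_le_pow_of_le_one hK0.le hK1 hblock
    rw [le_div_iff₀ (pow_pos hK0 _)]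
    calc K ^ (t (g*m)) * K ^ (N*m) ≤ K ^ (t (g*m)) * K ^ (s - t (g*m)) :=
          mul_le_mul_of_nonneg_left h2 (pow_nonneg hK0.le _)
    _ = K ^ s := h1.symm
  have hMt : M₁ ^ (s - t (g*m)) ≤ M₁ ^ (N*m) := pow_le_pow_right₀ hM₁1 hblock
  calc opNorm (transitionMatrix A σ s)
      ≤ opNorm (blockProd A σ (t (g*m)) (s - t (g*m))) * opNorm (blockProd A σ 0 (t (g*m))) := by
        rw [hsplit]; exact opNorm_mul_le _ _
  _ ≤ M₁ ^ (s - t (g*m)) * K ^ (t (g*m)) :=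
        mul_le_mul hb1 hb2 (opNorm_nonneg _) (pow_nonneg (le_trans zero_le_one hM₁1) _)
  _ ≤ M₁ ^ (N*m) * (K ^ s / K ^ (N*m)) := by
        apply mul_le_mul hMt hKt (pow_nonneg hK0.le _) (by positivity)
  _ = M₁ ^ (N*m) / K ^ (N*m) * K ^ s := by ring
  _ = M₁ ^ (N*m) / K ^ (N*m) * Real.exp (-γ * s) := by
        have hKs : K ^ s = Real.exp (-γ * s) := by
          rw [hKdef, ← Real.exp_nat_mul]
          congr 1
          ring
        rw [hKs]

end Main2
end GESaux

theorem ges_of_concatenated_p_cycles {d N m : ℕ} (hN : 1 ≤ N) (hm : 1 ≤ m)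
    (hNm : 2 ≤ N * m)
    (A : Fin N → Matrix (Fin d) (Fin d) ℝ) (p : Fin N)
    (M ρ ε γ : ℝ) (hM : 0 ≤ M) (hρ : 0 ≤ ρ) (hε : 0 ≤ ε) (hγ : 0 < γ)
    (hA : ∀ i, opNorm (A i) ≤ M)
    (hApm : opNorm (A p ^ m) ≤ ρ)
    (hcomm : ∀ i, i ≠ p → opNorm (A p * A i - A i * A p) ≤ ε)
    (hkey : ρ * M ^ ((N - 1) * m) +
        ((N : ℝ) - 1) * ((m : ℝ) * ((m : ℝ) + 1) / 2) * M ^ (N * m - 2) * ε ≤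
        Real.exp (-γ * (N * m : ℕ)))
    (σ : ℕ → Fin N) (t : ℕ → ℕ) (ht_mono : StrictMono t) (ht0 : t 0 = 0)
    (ht_p : ∀ j : ℕ, σ (t j) = p)
    (ht_inj : ∀ j : ℕ, Set.InjOn σ (Set.Ico (t j) (t (j + 1)))) :
    ∃ c : ℝ, 0 < c ∧ ∀ s : ℕ, 1 ≤ s →
      opNorm (transitionMatrix A σ s) ≤ c * Real.exp (-γ * s) := by
  exact GESaux.main_ges A p M ρ ε γ σ t hN hm hNm hM hρ hε hγ hA hApm hcomm hkey
    ht_mono ht0 ht_p ht_inj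
end
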